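/- arXiv:1412.6830 — 4 statements merged into one kernel-verified Lean document; each statement's English description precedes it below -/
import Mathlib

section
/- Any continuous piecewise-linear function g : ℝ → ℝ that equals the identity (g(x) = x) for all x ≥ u (for some u) and has constant slope α for all x < v (for some v) can be written in the form g(x) = max(0,x) + Σ_{s=1}^{S} a_s · max(0, -x + b_s) for some natural number S and real parameters a_s, b_s. -/
/-- Key lemma: a function affine on each piece of a partition and vanishing to the
right of the last breakpoint is a finite sum of terms `a * max 0 (-x + b)`. -/
lemma apl_rep_aux (n : ℕ) : ∀ (h : ℝ → ℝ) (t : Fin (n+1) → ℝ), Monotone t →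
    (∀ i : Fin n, ∃ m q : ℝ, ∀ x ∈ Set.Icc (t i.castSucc) (t i.succ), h x = m * x + q) →
    (∃ m q : ℝ, ∀ x ≤ t 0, h x = m * x + q) →
    (∀ x, t (Fin.last n) ≤ x → h x = 0) →
    ∃ (S : ℕ) (a b : Fin S → ℝ), ∀ x, h x = ∑ s, a s * max 0 (-x + b s) := by
  induction n with
  | zero =>
    rintro h t _ _ ⟨m, q, hm⟩ hr
    have h0 : h (t 0) = 0 := hr _ le_rfl
    have hq : q = -(m * t 0) := by have := hm (t 0) le_rfl; linarith
    refine ⟨1, ![-m], ![t 0], fun x => ?_⟩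
    simp only [Fin.sum_univ_one, Matrix.cons_val_zero]
    rcases le_total x (t 0) with hx | hx
    · rw [hm x hx, hq, max_eq_right (by linarith)]; ring
    · rw [hr x hx, max_eq_left (by linarith)]; ring
  | succ n ih =>
    rintro h t ht hint hleft hr
    obtain ⟨m, q, hm⟩ := hint (Fin.last n)
    rw [Fin.succ_last] at hm
    set T := t (Fin.last (n+1)) with hT
    set c := t ((Fin.last n).castSucc) with hc
    have hcT : c ≤ T := ht (Fin.le_last _)
    have hhT : h T = 0 := hr T le_rfl
    have hq : q = -(m * T) := by have := hm T ⟨hcT, le_rfl⟩; linarith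
    set h' := fun x => h x + m * max 0 (-x + T) with hh'
    have hright' : ∀ x, c ≤ x → h' x = 0 := by
      intro x hx
      rcases le_total x T with hxT | hxT
      · have := hm x ⟨hx, hxT⟩
        simp only [hh']
        rw [this, hq, max_eq_right (by linarith)]; ring
      · simp only [hh']
        rw [hr x hxT, max_eq_left (by linarith)]; ring
    have Hint : ∀ i : Fin n, ∃ m' q' : ℝ, ∀ x ∈ Set.Icc (t i.castSucc.castSucc)
        (t i.succ.castSucc), h' x = m' * x + q' := by
      intro i
      obtain ⟨m', q', hm'⟩ := hint i.castSucc
      rw [Fin.succ_castSucc] at hm'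
      refine ⟨m' - m, q' + m * T, fun x hx => ?_⟩
      have hx' : x ∈ Set.Icc (t i.castSucc.castSucc) (t i.succ.castSucc) := hx
      have hxT : x ≤ T := le_trans hx'.2 (ht (Fin.le_last _))
      simp only [hh']
      rw [hm' x hx', max_eq_right (by linarith)]; ring
    have Hleft : ∃ m0 q0 : ℝ, ∀ x ≤ t (0 : Fin (n+1)).castSucc, h' x = m0 * x + q0 := by
      obtain ⟨m0, q0, hm0⟩ := hleft
      refine ⟨m0 - m, q0 + m * T, fun x hx => ?_⟩
      have hx0 : x ≤ t 0 := by simpa using hx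
      have hxT : x ≤ T := le_trans hx0 (ht (Fin.zero_le _))
      simp only [hh']
      rw [hm0 x hx0, max_eq_right (by linarith)]; ring
    obtain ⟨S, a, b, hrep⟩ := ih h' (fun j => t j.castSucc)
      (fun i j hij => ht (Fin.castSucc_le_castSucc_iff.mpr hij))
      Hint Hleft (fun x hx => hright' x hx)
    refine ⟨S+1, Fin.cons (-m) a, Fin.cons T b, fun x => ?_⟩
    rw [Fin.sum_univ_succ]
    simp only [Fin.cons_zero, Fin.cons_succ]
    rw [← hrep x]
    simp only [hh']; ring

/-- universality of the APL form for continuous piecewise-linear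
functions that equal the identity on the right and have constant slope on the left. -/
theorem apl_universality (g : ℝ → ℝ) (hc : Continuous g)
    (hpl : ∃ (n : ℕ) (t : Fin (n+1) → ℝ), StrictMono t ∧
      (∀ i : Fin n, ∃ m q : ℝ, ∀ x ∈ Set.Icc (t i.castSucc) (t i.succ), g x = m * x + q) ∧
      (∃ m q : ℝ, ∀ x ≤ t 0, g x = m * x + q) ∧
      (∃ m q : ℝ, ∀ x, t (Fin.last n) ≤ x → g x = m * x + q))
    (u : ℝ) (hu : ∀ x, u ≤ x → g x = x)
    (v α : ℝ) (hv : ∀ x < v, HasDerivAt g α x) :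
    ∃ (S : ℕ) (a b : Fin S → ℝ),
      ∀ x, g x = max 0 x + ∑ s, a s * max 0 (-x + b s) := by
  obtain ⟨n, t, htmono, hint, hleft, hright⟩ := hpl
  set M := max (t (Fin.last n)) u with hM
  have hts : ∀ i : Fin (n+1), t i ≤ M :=
    fun i => le_trans (htmono.monotone (Fin.le_last i)) (le_max_left _ _)
  have hmono : Monotone (Fin.snoc t M : Fin (n+2) → ℝ) := by
    intro i j hij
    induction j using Fin.lastCases with
    | last =>
      induction i using Fin.lastCases with
      | last => simp
      | cast i => simp only [Fin.snoc_castSucc, Fin.snoc_last]; exact hts i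
    | cast j =>
      induction i using Fin.lastCases with
      | last => exact absurd hij (not_le.mpr (Fin.castSucc_lt_last j))
      | cast i =>
        simp only [Fin.snoc_castSucc]
        exact htmono.monotone (Fin.castSucc_le_castSucc_iff.mp hij)
  have Hint : ∀ i : Fin (n+1), ∃ m q : ℝ, ∀ x ∈ Set.Icc ((Fin.snoc t M : Fin (n+2) → ℝ) i.castSucc)
      ((Fin.snoc t M : Fin (n+2) → ℝ) i.succ), g x - x = m * x + q := by
    intro i
    induction i using Fin.lastCases with
    | last =>
      obtain ⟨m, q, hm⟩ := hright
      refine ⟨m - 1, q, fun x hx => ?_⟩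
      rw [Fin.succ_last, Fin.snoc_last, Fin.snoc_castSucc] at hx
      show g x - x = (m - 1) * x + q
      rw [hm x hx.1]; ring
    | cast i =>
      obtain ⟨m, q, hm⟩ := hint i
      refine ⟨m - 1, q, fun x hx => ?_⟩
      rw [Fin.succ_castSucc, Fin.snoc_castSucc, Fin.snoc_castSucc] at hx
      show g x - x = (m - 1) * x + q
      rw [hm x hx]; ring
  have Hleft : ∃ m q : ℝ, ∀ x ≤ (Fin.snoc t M : Fin (n+2) → ℝ) 0, g x - x = m * x + q := by
    obtain ⟨m, q, hm⟩ := hleft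
    refine ⟨m - 1, q, fun x hx => ?_⟩
    have h0 : (Fin.snoc t M : Fin (n+2) → ℝ) 0 = t 0 := by
      rw [← Fin.castSucc_zero, Fin.snoc_castSucc]
    rw [h0] at hx
    show g x - x = (m - 1) * x + q
    rw [hm x hx]; ring
  have Hright : ∀ x, (Fin.snoc t M : Fin (n+2) → ℝ) (Fin.last (n+1)) ≤ x → g x - x = 0 := by
    intro x hx
    rw [Fin.snoc_last] at hx
    show g x - x = 0
    rw [hu x (le_trans (le_max_right _ _) hx)]; ring
  obtain ⟨S, a, b, hrep⟩ := apl_rep_aux (n+1) (fun x => g x - x) (Fin.snoc t M) hmono Hint Hleft Hright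
  refine ⟨S+1, Fin.cons (-1) a, Fin.cons 0 b, fun x => ?_⟩
  rw [Fin.sum_univ_succ]
  simp only [Fin.cons_zero, Fin.cons_succ]
  have hx := hrep x
  rw [← hx]
  rcases le_total x 0 with h0 | h0
  · rw [max_eq_left h0, max_eq_right (by linarith)]; ring
  · rw [max_eq_right h0, max_eq_left (by linarith)]; ring
end

section
/- Any continuous piecewise-linear function g : ℝ → ℝ with finitely many pieces can be written as the difference of two convex functions, each a pointwise maximum of finitely many affine functions (i.e., as the difference of two maxout units of a single real variable). -/
/-- `f` is a maxout unit: a pointwise max of finitely many affine functions. -/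
def IsMaxoutAux (f : ℝ → ℝ) : Prop :=
  ∃ (N : ℕ) (w c : Fin (N+1) → ℝ), ∀ x,
    f x = Finset.univ.sup' ⟨0, Finset.mem_univ _⟩ (fun k => w k * x + c k : Fin (N+1) → ℝ)

/-- `g` is a difference of two maxout units. -/
def IsDMAux (g : ℝ → ℝ) : Prop :=
  ∃ f₁ f₂ : ℝ → ℝ, IsMaxoutAux f₁ ∧ IsMaxoutAux f₂ ∧ ∀ x, g x = f₁ x - f₂ x

lemma sup'_univ_equiv {α β : Type*} [Fintype α] [Fintype β] (e : α ≃ β)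
    (h₁ : (Finset.univ : Finset α).Nonempty) (h₂ : (Finset.univ : Finset β).Nonempty)
    (f : β → ℝ) :
    Finset.univ.sup' h₁ (fun a => f (e a)) = Finset.univ.sup' h₂ f := by
  apply le_antisymm
  · apply Finset.sup'_le
    intro a _
    exact Finset.le_sup' f (Finset.mem_univ (e a))
  · apply Finset.sup'_le
    intro b _
    simpa only [Equiv.apply_symm_apply] using Finset.le_sup' (fun a => f (e a)) (Finset.mem_univ (e.symm b))

lemma sup'_add_sup' {α β : Type*} [Fintype α] [Fintype β]
    (h₁ : (Finset.univ : Finset α).Nonempty) (h₂ : (Finset.univ : Finset β).Nonempty)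
    (a : α → ℝ) (b : β → ℝ) :
    Finset.univ.sup' h₁ a + Finset.univ.sup' h₂ b =
      Finset.univ.sup' (Finset.Nonempty.mono (Finset.subset_univ _) (h₁.product h₂)) (fun p : α × β => a p.1 + b p.2) := by
  apply le_antisymm
  · obtain ⟨i, _, hi⟩ := Finset.exists_mem_eq_sup' h₁ a
    obtain ⟨j, _, hj⟩ := Finset.exists_mem_eq_sup' h₂ b
    rw [hi, hj]
    exact Finset.le_sup' (f := fun p : α × β => a p.1 + b p.2) (Finset.mem_univ (i, j))
  · apply Finset.sup'_le
    intro p _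
    exact add_le_add (Finset.le_sup' a (Finset.mem_univ p.1)) (Finset.le_sup' b (Finset.mem_univ p.2))

lemma maxout_affine (m q : ℝ) : IsMaxoutAux (fun x => m * x + q) := by
  refine ⟨0, fun _ => m, fun _ => q, fun x => ?_⟩
  simp

lemma maxout_add {f g : ℝ → ℝ} (hf : IsMaxoutAux f) (hg : IsMaxoutAux g) :
    IsMaxoutAux (fun x => f x + g x) := by
  obtain ⟨N₁, w₁, c₁, h₁⟩ := hf
  obtain ⟨N₂, w₂, c₂, h₂⟩ := hg
  have hM : (N₁ + N₂ + N₁ * N₂) + 1 = (N₁ + 1) * (N₂ + 1) := by ring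
  let e : Fin ((N₁ + N₂ + N₁ * N₂) + 1) ≃ Fin (N₁+1) × Fin (N₂+1) :=
    (finCongr hM).trans finProdFinEquiv.symm
  refine ⟨N₁ + N₂ + N₁ * N₂, fun k => w₁ (e k).1 + w₂ (e k).2,
    fun k => c₁ (e k).1 + c₂ (e k).2, fun x => ?_⟩
  show f x + g x = _
  rw [h₁ x, h₂ x, sup'_add_sup' Finset.univ_nonempty Finset.univ_nonempty]
  rw [← sup'_univ_equiv e ⟨0, Finset.mem_univ _⟩ _
    (fun p : Fin (N₁+1) × Fin (N₂+1) => (w₁ p.1 * x + c₁ p.1) + (w₂ p.2 * x + c₂ p.2))]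
  apply Finset.sup'_congr _ rfl
  intro k _
  ring

lemma maxout_relu (w c : ℝ) : IsMaxoutAux (fun x => max (w * x + c) 0) := by
  refine ⟨1, ![w, 0], ![c, 0], fun x => ?_⟩
  show max (w * x + c) 0 = _
  refine le_antisymm (max_le ?_ ?_) (Finset.sup'_le _ _ fun k _ => ?_)
  · simpa using Finset.le_sup' (fun k => ![w, 0] k * x + ![c, 0] k : Fin 2 → ℝ)
      (Finset.mem_univ (0 : Fin 2))
  · simpa using Finset.le_sup' (fun k => ![w, 0] k * x + ![c, 0] k : Fin 2 → ℝ)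
      (Finset.mem_univ (1 : Fin 2))
  · fin_cases k <;> simp [le_max_iff]

lemma dm_of_maxout {f : ℝ → ℝ} (hf : IsMaxoutAux f) : IsDMAux f :=
  ⟨f, fun x => 0 * x + 0, hf, maxout_affine 0 0, fun x => by simp⟩

lemma dm_add {f g : ℝ → ℝ} (hf : IsDMAux f) (hg : IsDMAux g) :
    IsDMAux (fun x => f x + g x) := by
  obtain ⟨p₁, q₁, hp₁, hq₁, h₁⟩ := hf
  obtain ⟨p₂, q₂, hp₂, hq₂, h₂⟩ := hg
  exact ⟨fun x => p₁ x + p₂ x, fun x => q₁ x + q₂ x, maxout_add hp₁ hp₂, maxout_add hq₁ hq₂,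
    fun x => by show f x + g x = (p₁ x + p₂ x) - (q₁ x + q₂ x); rw [h₁ x, h₂ x]; ring⟩

lemma dm_congr {f g : ℝ → ℝ} (hf : IsDMAux f) (h : ∀ x, g x = f x) : IsDMAux g := by
  obtain ⟨p, q, hp, hq, hfx⟩ := hf
  exact ⟨p, q, hp, hq, fun x => by rw [h x, hfx x]⟩

lemma dm_relu_smul (δ T : ℝ) : IsDMAux (fun x => δ * max (x - T) 0) := by
  rcases le_or_gt 0 δ with hδ | hδ
  · apply dm_congr (dm_of_maxout (maxout_relu δ (-(δ * T))))
    intro x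
    rw [mul_max_of_nonneg _ _ hδ, mul_zero]
    ring_nf
  · refine ⟨fun x => 0 * x + 0, fun x => max ((-δ) * x + δ * T) 0,
      maxout_affine 0 0, maxout_relu (-δ) (δ * T), fun x => ?_⟩
    have h := mul_max_of_nonneg (x - T) 0 (neg_nonneg.2 hδ.le)
    rw [mul_zero, show -δ * (x - T) = -δ * x + δ * T from by ring] at h
    show δ * max (x - T) 0 = (0 * x + 0) - max (-δ * x + δ * T) 0
    linear_combination -h

/-- Key induction: a piecewise-linear function with breakpoints `t : Fin (n+1) → ℝ`
is a difference of maxouts. -/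
lemma pl_key : ∀ (n : ℕ) (t : Fin (n+1) → ℝ) (g : ℝ → ℝ), StrictMono t →
    (∀ i : Fin n, ∃ m q : ℝ, ∀ x ∈ Set.Icc (t i.castSucc) (t i.succ), g x = m * x + q) →
    (∃ m q : ℝ, ∀ x ≤ t 0, g x = m * x + q) →
    (∃ m q : ℝ, ∀ x, t (Fin.last n) ≤ x → g x = m * x + q) →
    IsDMAux g := by
  intro n
  induction n with
  | zero =>
    intro t g _ _ hl hr
    obtain ⟨m₁, q₁, h₁⟩ := hl
    obtain ⟨m₂, q₂, h₂⟩ := hr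
    have ht0 : t (Fin.last 0) = t 0 := rfl
    have hq : m₁ * t 0 + q₁ = m₂ * t 0 + q₂ := by
      rw [← h₁ (t 0) le_rfl, ← h₂ (t 0) (le_of_eq ht0.symm)]
    have key : ∀ x, g x = (m₁ * x + q₁) + (m₂ - m₁) * max (x - t 0) 0 := by
      intro x
      rcases le_total x (t 0) with hx | hx
      · rw [h₁ x hx, max_eq_right (sub_nonpos.2 hx), mul_zero, add_zero]
      · rw [h₂ x (ht0 ▸ hx), max_eq_left (sub_nonneg.2 hx)]
        linear_combination -hq
    exact dm_congr (dm_add (dm_of_maxout (maxout_affine m₁ q₁)) (dm_relu_smul (m₂ - m₁) (t 0))) key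
  | succ n ih =>
    intro t g ht hint hl hr
    obtain ⟨m, q, hm⟩ := hint (Fin.last n)
    obtain ⟨mR, qR, hR⟩ := hr
    set T := t (Fin.last (n+1)) with hT
    have hsucc_last : (Fin.last n).succ = Fin.last (n+1) := rfl
    have hTmem : T ∈ Set.Icc (t (Fin.last n).castSucc) (t (Fin.last n).succ) := by
      constructor
      · exact (ht.monotone (by simp [Fin.le_def]))
      · rw [hsucc_last]
    have hq : m * T + q = mR * T + qR := by
      rw [← hm T hTmem, ← hR T le_rfl]
    set δ := mR - m with hδ
    set g' := fun x => g x - δ * max (x - T) 0 with hg'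
    have hmono : ∀ i : Fin (n+2), t i ≤ T := fun i => ht.monotone (Fin.le_last i)
    have hg'int : ∀ i : Fin n, ∃ m' q' : ℝ,
        ∀ x ∈ Set.Icc ((t ∘ Fin.castSucc) i.castSucc) ((t ∘ Fin.castSucc) i.succ),
          g' x = m' * x + q' := by
      intro i
      obtain ⟨mi, qi, hi⟩ := hint i.castSucc
      refine ⟨mi, qi, fun x hx => ?_⟩
      have hx' : x ∈ Set.Icc (t i.castSucc.castSucc) (t i.castSucc.succ) := by
        rcases hx with ⟨hx1, hx2⟩
        exact ⟨hx1, by rwa [Fin.succ_castSucc]⟩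
      have hxT : x ≤ T := le_trans hx'.2 (hmono _)
      simp only [hg']
      rw [hi x hx', max_eq_right (sub_nonpos.2 hxT), mul_zero, sub_zero]
    have hg'l : ∃ m' q' : ℝ, ∀ x ≤ (t ∘ Fin.castSucc) 0, g' x = m' * x + q' := by
      obtain ⟨ml, ql, hlx⟩ := hl
      refine ⟨ml, ql, fun x hx => ?_⟩
      have hx0 : x ≤ t 0 := by simpa using hx
      have hxT : x ≤ T := le_trans hx0 (hmono 0)
      simp only [hg']
      rw [hlx x hx0, max_eq_right (sub_nonpos.2 hxT), mul_zero, sub_zero]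
    have hg'r : ∃ m' q' : ℝ, ∀ x, (t ∘ Fin.castSucc) (Fin.last n) ≤ x → g' x = m' * x + q' := by
      refine ⟨m, q, fun x hx => ?_⟩
      have hx0 : t (Fin.last n).castSucc ≤ x := hx
      simp only [hg']
      rcases le_total x T with hxT | hxT
      · rw [hm x ⟨hx0, hsucc_last ▸ hxT⟩, max_eq_right (sub_nonpos.2 hxT), mul_zero, sub_zero]
      · rw [hR x hxT, max_eq_left (sub_nonneg.2 hxT), hδ]
        linear_combination -hq
    have hdm' : IsDMAux g' :=
      ih (t ∘ Fin.castSucc) g' (ht.comp fun _ _ h => h) hg'int hg'l hg'r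
    apply dm_congr (dm_add hdm' (dm_relu_smul δ T))
    intro x
    simp only [hg']
    ring

/-- any continuous piecewise-linear function on ℝ is a difference of two
maxout units (pointwise maxima of finitely many affine functions). -/
theorem pl_eq_diff_of_maxouts (g : ℝ → ℝ) (hc : Continuous g)
    (hpl : ∃ (n : ℕ) (t : Fin (n+1) → ℝ), StrictMono t ∧
      (∀ i : Fin n, ∃ m q : ℝ, ∀ x ∈ Set.Icc (t i.castSucc) (t i.succ), g x = m * x + q) ∧
      (∃ m q : ℝ, ∀ x ≤ t 0, g x = m * x + q) ∧
      (∃ m q : ℝ, ∀ x, t (Fin.last n) ≤ x → g x = m * x + q)) :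
    ∃ (N₁ N₂ : ℕ) (w₁ c₁ : Fin (N₁+1) → ℝ) (w₂ c₂ : Fin (N₂+1) → ℝ),
      ∀ x, g x =
        Finset.univ.sup' ⟨0, Finset.mem_univ _⟩ (fun k => w₁ k * x + c₁ k : Fin (N₁+1) → ℝ) -
        Finset.univ.sup' ⟨0, Finset.mem_univ _⟩ (fun k => w₂ k * x + c₂ k : Fin (N₂+1) → ℝ) := by
  obtain ⟨n, t, ht, hint, hl, hr⟩ := hpl
  obtain ⟨f₁, f₂, ⟨N₁, w₁, c₁, h₁⟩, ⟨N₂, w₂, c₂, h₂⟩, hg⟩ := pl_key n t g ht hint hl hr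
  exact ⟨N₁, N₂, w₁, c₁, w₂, c₂, fun x => by rw [hg x, h₁ x, h₂ x]⟩
end

section
/- If g is a continuous piecewise-linear function with boundary points b^0 < b^1 < ... < b^K, slope a^k on the k-th bounded interval (b^{k-1}, b^k), slope a^0 on (-∞, b^0), and g(x) = x for x ≥ b^K, then g equals the explicit construction h(x) = -a^0 max(0,-x+b^0) + Σ_{k=1}^K a^k (max(0,-x+b^{k-1}) - max(0,-x+b^k)) - max(0,-x) + max(0,x) + max(0,-x+b^K). -/
private def aplH (K : ℕ) (b a : Fin (K+1) → ℝ) (x : ℝ) : ℝ :=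
  -(a 0) * max 0 (-x + b 0) +
      (∑ k : Fin K, a k.succ * (max 0 (-x + b k.castSucc) - max 0 (-x + b k.succ))) -
      max 0 (-x) + max 0 x + max 0 (-x + b (Fin.last K))

private lemma aplH_id (K : ℕ) (b a : Fin (K+1) → ℝ) (hb : StrictMono b) (x : ℝ)
    (hx : b (Fin.last K) ≤ x) : aplH K b a x = x := by
  have m0 : ∀ t : ℝ, t ≤ x → max 0 (-x + t) = 0 := fun t h => max_eq_left (by linarith)
  have hid : -max 0 (-x) + max 0 x = x := by
    rcases le_total 0 x with h | h
    · rw [max_eq_right h, max_eq_left (by linarith)]; ring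
    · rw [max_eq_left h, max_eq_right (by linarith : (0:ℝ) ≤ -x)]; ring
  unfold aplH
  rw [m0 _ ((hb.monotone (Fin.zero_le _)).trans hx), m0 _ hx,
    Finset.sum_eq_zero (fun k _ => by
      rw [m0 _ ((hb.monotone (Fin.le_last _)).trans hx),
        m0 _ ((hb.monotone (Fin.le_last _)).trans hx)]; ring)]
  linarith

private lemma aplH_diff_mid (K : ℕ) (b a : Fin (K+1) → ℝ) (hb : StrictMono b) (k0 : Fin K)
    {x y : ℝ} (hx : x ∈ Set.Icc (b k0.castSucc) (b k0.succ))
    (hy : y ∈ Set.Icc (b k0.castSucc) (b k0.succ)) :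
    aplH K b a x - aplH K b a y = a k0.succ * (x - y) := by
  have m0 : ∀ z t : ℝ, t ≤ z → max 0 (-z + t) = 0 := fun z t h => max_eq_left (by linarith)
  have m1 : ∀ z t : ℝ, z ≤ t → max 0 (-z + t) = -z + t := fun z t h => max_eq_right (by linarith)
  have hid : ∀ z : ℝ, -max 0 (-z) + max 0 z = z := by
    intro z
    rcases le_total 0 z with h | h
    · rw [max_eq_right h, max_eq_left (by linarith)]; ring
    · rw [max_eq_left h, max_eq_right (by linarith : (0:ℝ) ≤ -z)]; ring
  have T : ∀ z : ℝ, ∀ k : Fin K,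
      a k.succ * (max 0 (-z + b k.castSucc) - max 0 (-z + b k.succ)) =
      a k.succ * (max 0 (-z + b k.castSucc) - max 0 (-z + b k.succ)) := fun _ _ => rfl
  have hterm : ∀ k : Fin K, k ≠ k0 →
      (a k.succ * (max 0 (-x + b k.castSucc) - max 0 (-x + b k.succ)))
      - (a k.succ * (max 0 (-y + b k.castSucc) - max 0 (-y + b k.succ))) = 0 := by
    intro k hk
    rcases hk.lt_or_gt with hlt | hlt
    · -- k < k0 : everything to the left, all maxes are 0
      have hks : (k.succ : Fin (K+1)) ≤ k0.castSucc := hlt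
      have h1 : b k.succ ≤ x := le_trans (hb.monotone hks) hx.1
      have h2 : b k.castSucc ≤ x := le_trans (hb.monotone (Fin.castSucc_lt_succ (i := k)).le) h1
      have h3 : b k.succ ≤ y := le_trans (hb.monotone hks) hy.1
      have h4 : b k.castSucc ≤ y := le_trans (hb.monotone (Fin.castSucc_lt_succ (i := k)).le) h3
      rw [m0 _ _ h1, m0 _ _ h2, m0 _ _ h3, m0 _ _ h4]; ring
    · -- k0 < k : everything to the right, all maxes are linear
      have hks : (k0.succ : Fin (K+1)) ≤ k.castSucc := hlt
      have h1 : x ≤ b k.castSucc := le_trans hx.2 (hb.monotone hks)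
      have h2 : x ≤ b k.succ := le_trans h1 (hb.monotone (Fin.castSucc_lt_succ (i := k)).le)
      have h3 : y ≤ b k.castSucc := le_trans hy.2 (hb.monotone hks)
      have h4 : y ≤ b k.succ := le_trans h3 (hb.monotone (Fin.castSucc_lt_succ (i := k)).le)
      rw [m1 _ _ h1, m1 _ _ h2, m1 _ _ h3, m1 _ _ h4]; ring
  have hsum : (∑ k : Fin K, a k.succ * (max 0 (-x + b k.castSucc) - max 0 (-x + b k.succ)))
      - (∑ k : Fin K, a k.succ * (max 0 (-y + b k.castSucc) - max 0 (-y + b k.succ))) =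
      a k0.succ * (x - y) := by
    rw [← Finset.sum_sub_distrib]
    rw [Finset.sum_eq_single k0 (fun k _ hk => hterm k hk)
      (fun hk => absurd (Finset.mem_univ k0) hk)]
    rw [m0 _ _ hx.1, m0 _ _ hy.1, m1 _ _ hx.2, m1 _ _ hy.2]
    ring
  have hb0x : max 0 (-x + b 0) = 0 := m0 _ _ (le_trans (hb.monotone (Fin.zero_le _)) hx.1)
  have hb0y : max 0 (-y + b 0) = 0 := m0 _ _ (le_trans (hb.monotone (Fin.zero_le _)) hy.1)
  have hlx : max 0 (-x + b (Fin.last K)) = -x + b (Fin.last K) :=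
    m1 _ _ (le_trans hx.2 (hb.monotone (Fin.le_last _)))
  have hly : max 0 (-y + b (Fin.last K)) = -y + b (Fin.last K) :=
    m1 _ _ (le_trans hy.2 (hb.monotone (Fin.le_last _)))
  unfold aplH
  rw [hb0x, hb0y, hlx, hly]
  have e1 := hid x
  have e2 := hid y
  linarith [hsum]

private lemma aplH_diff_left (K : ℕ) (b a : Fin (K+1) → ℝ) (hb : StrictMono b)
    {x y : ℝ} (hx : x ≤ b 0) (hy : y ≤ b 0) :
    aplH K b a x - aplH K b a y = a 0 * (x - y) := by
  have m1 : ∀ z t : ℝ, z ≤ t → max 0 (-z + t) = -z + t := fun z t h => max_eq_right (by linarith)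
  have hid : ∀ z : ℝ, -max 0 (-z) + max 0 z = z := by
    intro z
    rcases le_total 0 z with h | h
    · rw [max_eq_right h, max_eq_left (by linarith)]; ring
    · rw [max_eq_left h, max_eq_right (by linarith : (0:ℝ) ≤ -z)]; ring
  have hsum : (∑ k : Fin K, a k.succ * (max 0 (-x + b k.castSucc) - max 0 (-x + b k.succ)))
      - (∑ k : Fin K, a k.succ * (max 0 (-y + b k.castSucc) - max 0 (-y + b k.succ))) = 0 := by
    rw [← Finset.sum_sub_distrib]
    apply Finset.sum_eq_zero
    intro k _
    have h1 : x ≤ b k.castSucc := le_trans hx (hb.monotone (Fin.zero_le _))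
    have h2 : x ≤ b k.succ := le_trans hx (hb.monotone (Fin.zero_le _))
    have h3 : y ≤ b k.castSucc := le_trans hy (hb.monotone (Fin.zero_le _))
    have h4 : y ≤ b k.succ := le_trans hy (hb.monotone (Fin.zero_le _))
    rw [m1 _ _ h1, m1 _ _ h2, m1 _ _ h3, m1 _ _ h4]; ring
  unfold aplH
  rw [m1 _ _ hx, m1 _ _ hy, m1 _ _ (le_trans hx (hb.monotone (Fin.zero_le _))),
    m1 _ _ (le_trans hy (hb.monotone (Fin.zero_le _)))]
  have e1 := hid x
  have e2 := hid y
  linarith [hsum]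

/-- the explicit construction (Equation 2) reproduces any continuous
piecewise-linear g with boundary points b^0 < ... < b^K, slope a^k on the k-th region,
and g(x) = x to the right of b^K. -/
theorem apl_explicit_construction (K : ℕ) (b a : Fin (K+1) → ℝ) (hb : StrictMono b)
    (g : ℝ → ℝ) (hc : Continuous g)
    (hleft : ∃ q : ℝ, ∀ x ≤ b 0, g x = a 0 * x + q)
    (hmid : ∀ k : Fin K, ∃ q : ℝ,
      ∀ x ∈ Set.Icc (b k.castSucc) (b k.succ), g x = a k.succ * x + q)
    (hright : ∀ x, b (Fin.last K) ≤ x → g x = x) :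
    ∀ x, g x =
      -(a 0) * max 0 (-x + b 0) +
      (∑ k : Fin K, a k.succ * (max 0 (-x + b k.castSucc) - max 0 (-x + b k.succ))) -
      max 0 (-x) + max 0 x + max 0 (-x + b (Fin.last K)) := by
  have claim : ∀ j : Fin (K+1), ∀ x, b j ≤ x → g x = aplH K b a x := by
    intro j
    induction j using Fin.reverseInduction with
    | last => intro x hx; rw [hright x hx, aplH_id K b a hb x hx]
    | cast i ih =>
      intro x hx
      rcases le_total (b i.succ) x with hge | hle
      · exact ih x hge
      · obtain ⟨q, hq⟩ := hmid i
        have hmem : x ∈ Set.Icc (b i.castSucc) (b i.succ) := ⟨hx, hle⟩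
        have hmem' : b i.succ ∈ Set.Icc (b i.castSucc) (b i.succ) :=
          ⟨hb.monotone (Fin.castSucc_lt_succ (i := i)).le, le_rfl⟩
        have h1 := hq x hmem
        have h2 := hq (b i.succ) hmem'
        have h3 := ih (b i.succ) le_rfl
        have h4 := aplH_diff_mid K b a hb i hmem hmem'
        linarith
  intro x
  rcases le_total (b 0) x with hge | hle
  · exact claim 0 x hge
  · obtain ⟨q, hq⟩ := hleft
    have h1 := hq x hle
    have h2 := hq (b 0) le_rfl
    have h3 := claim 0 (b 0) le_rfl
    have h4 := aplH_diff_left K b a hb hle le_rfl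
    show g x = aplH K b a x
    linarith
end

section
/- For every continuous function f : [A, B] → ℝ and every ε > 0, there exists an APL function h (for some number of hinges S and parameters a_s, b_s) such that |h(x) - f(x)| < ε for all x ∈ [A, B]. -/
set_option maxHeartbeats 1000000 in
/-- APL functions uniformly approximate continuous functions on a
compact interval. -/
theorem apl_uniform_approx (A B : ℝ) (f : ℝ → ℝ)
    (hf : ContinuousOn f (Set.Icc A B)) (ε : ℝ) (hε : 0 < ε) :
    ∃ (S : ℕ) (a b : Fin S → ℝ), ∀ x ∈ Set.Icc A B,
      |(max 0 x + ∑ s, a s * max 0 (-x + b s)) - f x| < ε := by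
  rcases lt_trichotomy A B with hAB | rfl | hAB
  · -- main case : A < B
    set g : ℝ → ℝ := fun x => f x - max 0 x with hg_def
    have hg : ContinuousOn g (Set.Icc A B) :=
      hf.sub ((continuous_const.max continuous_id).continuousOn)
    have hug := isCompact_Icc.uniformContinuousOn_of_continuous hg
    rw [Metric.uniformContinuousOn_iff] at hug
    obtain ⟨δ, hδ, hδ'⟩ := hug (ε / 2) (by linarith)
    obtain ⟨N, hN⟩ := exists_nat_gt ((B - A) / δ)
    set n := N + 1 with hn_def
    have hn1 : 1 ≤ n := Nat.le_add_left 1 N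
    have hnpos : (0 : ℝ) < n := by positivity
    set h0 := (B - A) / n with hh0
    have hh0pos : 0 < h0 := div_pos (by linarith) hnpos
    have hh0δ : h0 < δ := by
      rw [hh0, div_lt_iff₀ hnpos]
      have h1 : B - A < δ * N := by
        rw [div_lt_iff₀ hδ] at hN
        linarith
      have h2 : (N : ℝ) ≤ n := by
        rw [hn_def]; push_cast; linarith
      nlinarith
    set X : ℕ → ℝ := fun i => A + i * h0 with hX
    have hXn : X n = B := by
      simp only [hX, hh0]
      field_simp
      ring
    have hXsucc : ∀ i : ℕ, X (i + 1) = X i + h0 := by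
      intro i
      simp only [hX]
      push_cast
      ring
    have hXmono : ∀ i j : ℕ, i ≤ j → X i ≤ X j := by
      intro i j hij
      simp only [hX]
      have h1 : (i : ℝ) ≤ j := Nat.cast_le.2 hij
      nlinarith
    have hXmem : ∀ i : ℕ, i ≤ n → X i ∈ Set.Icc A B := by
      intro i hi
      constructor
      · simp only [hX]
        have : (0 : ℝ) ≤ i * h0 := mul_nonneg (Nat.cast_nonneg i) hh0pos.le
        linarith
      · rw [← hXn]; exact hXmono _ _ hi
    set M : ℕ → ℝ := fun i => if i ≤ n then (g (X i) - g (X (i - 1))) / h0 else 0 with hM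
    set aN : ℕ → ℝ := fun s => if s < n then M (s + 2) - M (s + 1)
      else if s = n then -(g (X n)) else g (X n) with haN
    set bN : ℕ → ℝ := fun s => if s < n then X (s + 1)
      else if s = n then B + 1 else B + 2 with hbN
    refine ⟨n + 2, fun s => aN s, fun s => bN s, ?_⟩
    intro x hx
    obtain ⟨hxA, hxB⟩ := hx
    set k := min (n - 1) ⌊(x - A) / h0⌋₊ with hk
    have hkn : k + 1 ≤ n := by
      have : k ≤ n - 1 := min_le_left _ _
      omega
    have hfl0 : (0 : ℝ) ≤ (x - A) / h0 := div_nonneg (by linarith) hh0pos.le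
    have hXk_le : X k ≤ x := by
      have h1 : (k : ℝ) ≤ (x - A) / h0 := by
        refine le_trans ?_ (Nat.floor_le hfl0)
        exact_mod_cast min_le_right _ _
      rw [le_div_iff₀ hh0pos] at h1
      simp only [hX]
      linarith
    have hx_le : x ≤ X (k + 1) := by
      rcases le_or_gt (⌊(x - A) / h0⌋₊) (n - 1) with hc | hc
      · have hkeq : k = ⌊(x - A) / h0⌋₊ := min_eq_right hc
        have h1 : (x - A) / h0 < (k : ℝ) + 1 := by
          rw [hkeq]; push_cast; exact Nat.lt_floor_add_one _
        rw [div_lt_iff₀ hh0pos] at h1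
        simp only [hX]
        push_cast
        nlinarith
      · have hkeq : k = n - 1 := min_eq_left hc.le
        have : k + 1 = n := by omega
        rw [this, hXn]
        exact hxB
    -- rewrite the Fin sum as a range sum
    have hsum1 : (∑ s : Fin (n + 2), aN s.val * max 0 (-x + bN s.val))
        = ∑ i ∈ Finset.range (n + 2), aN i * max 0 (-x + bN i) :=
      Fin.sum_univ_eq_sum_range (fun i => aN i * max 0 (-x + bN i)) (n + 2)
    -- last two terms give the constant g (X n)
    have hlast : aN (n + 1) * max 0 (-x + bN (n + 1)) + aN n * max 0 (-x + bN n)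
        = g (X n) := by
      have e1 : aN (n + 1) = g (X n) := by
        simp only [haN]
        rw [if_neg (by omega), if_neg (by omega)]
      have e2 : bN (n + 1) = B + 2 := by
        simp only [hbN]
        rw [if_neg (by omega), if_neg (by omega)]
      have e3 : aN n = -(g (X n)) := by
        simp only [haN]
        rw [if_neg (by omega)]
        simp
      have e4 : bN n = B + 1 := by
        simp only [hbN]
        rw [if_neg (by omega)]
        simp
      rw [e1, e2, e3, e4, max_eq_right (by linarith), max_eq_right (by linarith)]
      ring
    -- the initial part of the sum (indices < k) vanishes
    have hinit : ∑ i ∈ Finset.Ico 0 k, aN i * max 0 (-x + bN i) = 0 := by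
      refine Finset.sum_eq_zero ?_
      intro i hi
      rw [Finset.mem_Ico] at hi
      have hik : i < k := hi.2
      have hin : i < n := by omega
      have hb : bN i = X (i + 1) := by simp only [hbN]; rw [if_pos hin]
      have hXle : X (i + 1) ≤ x := le_trans (hXmono _ _ (by omega)) hXk_le
      rw [hb, max_eq_left (by linarith), mul_zero]
    -- the main part telescopes
    have hmain : ∑ i ∈ Finset.Ico k n, aN i * max 0 (-x + bN i)
        = M (k + 1) * (x - X k) - (g (X n) - g (X k)) := by
      have hcongr : ∀ i ∈ Finset.Ico k n, aN i * max 0 (-x + bN i)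
          = (M (i + 1 + 1) * (X (i + 1) - x) - M (i + 1) * (X i - x))
            - (g (X (i + 1)) - g (X i)) := by
        intro i hi
        rw [Finset.mem_Ico] at hi
        have hin : i < n := hi.2
        have ha : aN i = M (i + 2) - M (i + 1) := by simp only [haN]; rw [if_pos hin]
        have hb : bN i = X (i + 1) := by simp only [hbN]; rw [if_pos hin]
        have hXge : x ≤ X (i + 1) := le_trans hx_le (hXmono _ _ (by omega))
        have hMh : M (i + 1) * h0 = g (X (i + 1)) - g (X i) := by
          simp only [hM]
          rw [if_pos (by omega)]
          have : i + 1 - 1 = i := by omega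
          rw [this]
          field_simp
        rw [ha, hb, max_eq_right (by linarith)]
        have hXs : X (i + 1) = X i + h0 := hXsucc i
        linear_combination (-1 : ℝ) * hMh - M (i + 1) * hXs
      have hM0 : M (n + 1) = 0 := by
        simp only [hM]
        rw [if_neg (by omega)]
      have hknle : k ≤ n := by omega
      rw [Finset.sum_congr rfl hcongr, Finset.sum_sub_distrib]
      have T1 : ∑ i ∈ Finset.Ico k n,
          (M (i + 1 + 1) * (X (i + 1) - x) - M (i + 1) * (X i - x))
          = M (n + 1) * (X n - x) - M (k + 1) * (X k - x) := by
        rw [Finset.sum_Ico_eq_sub _ hknle]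
        have a1 := Finset.sum_range_sub (fun i => M (i + 1) * (X i - x)) n
        have a2 := Finset.sum_range_sub (fun i => M (i + 1) * (X i - x)) k
        rw [a1, a2]
        ring
      have T2 : ∑ i ∈ Finset.Ico k n, (g (X (i + 1)) - g (X i))
          = g (X n) - g (X k) := by
        rw [Finset.sum_Ico_eq_sub _ hknle]
        have a1 := Finset.sum_range_sub (fun i => g (X i)) n
        have a2 := Finset.sum_range_sub (fun i => g (X i)) k
        rw [a1, a2]
        ring
      rw [T1, T2, hM0]
      ring
    -- assemble the value of the whole sum
    show |(max 0 x + ∑ s : Fin (n + 2), aN s.1 * max 0 (-x + bN s.1)) - f x| < ε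
    have hgx : g x = f x - max 0 x := rfl
    have key : (max 0 x + ∑ s : Fin (n + 2), aN s.1 * max 0 (-x + bN s.1)) - f x
        = M (k + 1) * (x - X k) + g (X k) - g x := by
      rw [hsum1, Finset.sum_range_succ, Finset.sum_range_succ, Finset.range_eq_Ico,
        ← Finset.sum_Ico_consecutive (fun i => aN i * max 0 (-x + bN i))
          (Nat.zero_le k) (by omega : k ≤ n), hinit, hmain]
      linear_combination hlast + hgx
    rw [key]
    have hMk : M (k + 1) = (g (X (k + 1)) - g (X k)) / h0 := by
      simp only [hM]
      rw [if_pos hkn, Nat.add_sub_cancel]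
    set t := (x - X k) / h0 with ht
    have ht0 : 0 ≤ t := div_nonneg (by linarith) hh0pos.le
    have ht1 : t ≤ 1 := by
      rw [ht, div_le_one hh0pos]
      have := hXsucc k
      linarith
    have e1 : M (k + 1) * (x - X k) + g (X k) - g x
        = (1 - t) * (g (X k) - g x) + t * (g (X (k + 1)) - g x) := by
      have hxk : x - X k = t * h0 := by
        rw [ht, div_mul_cancel₀ _ hh0pos.ne']
      have hMt : M (k + 1) * (x - X k) = t * (g (X (k + 1)) - g (X k)) := by
        rw [hMk, hxk]
        field_simp
      linear_combination hMt
    have hb1 : |g (X k) - g x| < ε / 2 := by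
      have hd : dist (X k) x < δ := by
        rw [Real.dist_eq, abs_sub_comm, abs_of_nonneg (sub_nonneg.2 hXk_le)]
        have := hXsucc k
        linarith
      have := hδ' (X k) (hXmem k (by omega)) x ⟨hxA, hxB⟩ hd
      rwa [Real.dist_eq] at this
    have hb2 : |g (X (k + 1)) - g x| < ε / 2 := by
      have hd : dist (X (k + 1)) x < δ := by
        rw [Real.dist_eq, abs_of_nonneg (sub_nonneg.2 hx_le)]
        have := hXsucc k
        linarith
      have := hδ' (X (k + 1)) (hXmem (k + 1) hkn) x ⟨hxA, hxB⟩ hd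
      rwa [Real.dist_eq] at this
    rw [e1]
    have h1 : |(1 - t) * (g (X k) - g x)| ≤ (1 - t) * (ε / 2) := by
      rw [abs_mul, abs_of_nonneg (by linarith)]
      exact mul_le_mul_of_nonneg_left hb1.le (by linarith)
    have h2 : |t * (g (X (k + 1)) - g x)| ≤ t * (ε / 2) := by
      rw [abs_mul, abs_of_nonneg ht0]
      exact mul_le_mul_of_nonneg_left hb2.le ht0
    have habs := abs_add_le ((1 - t) * (g (X k) - g x)) (t * (g (X (k + 1)) - g x))
    nlinarith
  · -- A = B
    refine ⟨2, ![-(f A - max 0 A), f A - max 0 A], ![A + 1, A + 2], ?_⟩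
    intro x hx
    have hxA : x = A := le_antisymm hx.2 hx.1
    subst hxA
    have h1 : max 0 (-x + (x + 1)) = 1 := by
      rw [max_eq_right] <;> norm_num
    have h2 : max 0 (-x + (x + 2)) = 2 := by
      rw [max_eq_right] <;> norm_num
    rw [Fin.sum_univ_two]
    simp only [Matrix.cons_val_zero, Matrix.cons_val_one, Matrix.head_cons, h1, h2]
    have : max 0 x + (-(f x - max 0 x) * 1 + (f x - max 0 x) * 2) - f x = 0 := by ring
    rw [this]
    simpa using hε
  · -- B < A : empty interval
    refine ⟨0, ![], ![], ?_⟩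
    intro x hx
    exact absurd (hx.1.trans hx.2) (not_le.2 hAB)
end
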